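/- Let d > 0 and let c* > 0 be such that Σ_{i=j}^∞ |a_i f(x_{i+1}) + q_i x_i^α| ≤ c* for every j and every sequence x ∈ B. Let L_γ be a Lipschitz constant of t ↦ t^{1/γ} on [−c*, c*], L_d a Lipschitz constant of f on [−d, d], and L_α a Lipschitz constant of u ↦ u^α on [−d, d]. Then for all x, y ∈ B and all n ≥ n_3, |(Tx)_n − (Ty)_n| ≤ |p_n| |x_{n−k} − y_{n−k}| + L_γ L_d Σ_{j=n}^∞ |1/r_j|^{1/γ} Σ_{i=j}^∞ |a_i| |x_{i+1} − y_{i+1}| + L_γ L_α Σ_{j=n}^∞ |1/r_j|^{1/γ} Σ_{i=j}^∞ |q_i| |x_i − y_i|, provided all the series involved converge absolutely. -/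

import Mathlib

open Filter Topology

/-- Sign-preserving power `x ^ ρ` for a rational exponent `ρ = s/t` (in lowest terms) with
odd denominator `t`: it is the unique real `y` with `y ^ t = x ^ s`.  For `x ≥ 0` it agrees
with the usual real power. -/
noncomputable def opow (x : ℝ) (ρ : ℚ) : ℝ :=
  if Even ρ.num ∨ 0 ≤ x then |x| ^ (ρ : ℝ) else -(|x| ^ (ρ : ℝ))

/-- The operator `T`:
`(Tx)_n = -p_n x_{n-k} - Σ_{j=n}^∞ ((1/r_j) Σ_{i=j}^∞ (a_i f(x_{i+1}) + q_i x_i^α))^{1/γ}`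
for `n ≥ n₃`, and `(Tx)_n = x_n` for `n < n₃`. -/
noncomputable def Tmap (k n₃ : ℕ) (r a p q : ℕ → ℝ) (f : ℝ → ℝ) (α γ : ℚ)
    (x : ℕ → ℝ) (n : ℕ) : ℝ :=
  if n₃ ≤ n then
    -(p n * x (n - k)) -
      ∑' j : ℕ, opow ((1 / r (n + j)) *
        ∑' i : ℕ, (a (n + j + i) * f (x (n + j + i + 1)) +
          q (n + j + i) * opow (x (n + j + i)) α)) γ⁻¹
  else x n

/-- The basic Lipschitz-type estimate for `T` on `B = {x : |x_n| ≤ d for n ≥ n₀}`: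
for all `x, y ∈ B` and `n ≥ n₃`,
`|(Tx)_n - (Ty)_n| ≤ |p_n| |x_{n-k} - y_{n-k}|
  + L_γ L_d Σ_{j=n}^∞ |1/r_j|^{1/γ} Σ_{i=j}^∞ |a_i| |x_{i+1} - y_{i+1}|
  + L_γ L_α Σ_{j=n}^∞ |1/r_j|^{1/γ} Σ_{i=j}^∞ |q_i| |x_i - y_i|`,
provided all the series involved converge absolutely. -/

private lemma opow_mul_left (ρ : ℚ) (hρ : (ρ : ℝ) ≠ 0) (c t : ℝ) :
    opow (c * t) ρ =
      (if Even ρ.num ∨ 0 ≤ c then (1 : ℝ) else -1) * (|c| ^ (ρ : ℝ) * opow t ρ) := by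
  have habs : |c * t| ^ (ρ : ℝ) = |c| ^ (ρ : ℝ) * |t| ^ (ρ : ℝ) := by
    rw [abs_mul, Real.mul_rpow (abs_nonneg _) (abs_nonneg _)]
  by_cases hE : Even ρ.num
  · simp only [opow, hE, true_or, if_true, habs, one_mul]
  · have hop : ∀ u : ℝ, opow u ρ = if 0 ≤ u then |u| ^ (ρ : ℝ) else -(|u| ^ (ρ : ℝ)) := by
      intro u; simp [opow, hE]
    rcases lt_trichotomy c 0 with hc | hc | hc
    · rw [if_neg (by simp [hE, hc.not_ge]), hop, hop]
      rcases lt_trichotomy t 0 with ht | ht | ht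
      · rw [if_pos (mul_pos_of_neg_of_neg hc ht).le, if_neg ht.not_ge, habs]; ring
      · subst ht; simp [Real.zero_rpow hρ]
      · rw [if_neg (mul_neg_of_neg_of_pos hc ht).not_ge, if_pos ht.le, habs]; ring
    · subst hc; simp [opow, Real.zero_rpow hρ]
    · rw [if_pos (Or.inr hc.le), hop, hop]
      rcases lt_trichotomy t 0 with ht | ht | ht
      · rw [if_neg (mul_neg_of_pos_of_neg hc ht).not_ge, if_neg ht.not_ge, habs]; ring
      · subst ht; simp [Real.zero_rpow hρ]
      · rw [if_pos (mul_nonneg hc.le ht.le), if_pos ht.le, habs]; ring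

private lemma opow_mul_sub_abs (ρ : ℚ) (hρ : (ρ : ℝ) ≠ 0) (c t s : ℝ) :
    |opow (c * t) ρ - opow (c * s) ρ| = |c| ^ (ρ : ℝ) * |opow t ρ - opow s ρ| := by
  have hC : (0 : ℝ) ≤ |c| ^ (ρ : ℝ) := Real.rpow_nonneg (abs_nonneg _) _
  rw [opow_mul_left ρ hρ c t, opow_mul_left ρ hρ c s]
  split_ifs with h
  · rw [one_mul, one_mul, ← mul_sub, abs_mul, abs_of_nonneg hC]
  · rw [show (-1 : ℝ) * (|c| ^ (ρ:ℝ) * opow t ρ) - (-1) * (|c| ^ (ρ:ℝ) * opow s ρ)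
        = -(|c| ^ (ρ:ℝ) * (opow t ρ - opow s ρ)) by ring, abs_neg, abs_mul,
      abs_of_nonneg hC]

theorem T_lipschitz_estimate
    (k : ℕ) (hk : 0 < k) (α γ : ℚ)
    (hα : 1 ≤ α) (hαden : Odd α.den)
    (hγ0 : 0 < γ) (hγ1 : γ ≤ 1) (hγnum : Odd γ.num) (hγden : Odd γ.den)
    (f : ℝ → ℝ) (hf : LocallyLipschitz f)
    (r a p q : ℕ → ℝ) (hr : ∀ n, r n ≠ 0)
    (d : ℝ) (hd : 0 < d)
    (n₀ n₃ : ℕ) (hn₃ : n₀ + k ≤ n₃)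
    (cstar : ℝ) (hcstar0 : 0 < cstar)
    -- `Σ_{i=j}^∞ |a_i f(x_{i+1}) + q_i x_i^α|` converges and is at most `cstar`
    -- for every `j` and every `x ∈ B`
    (hcstar : ∀ x : ℕ → ℝ, (∀ i, n₀ ≤ i → |x i| ≤ d) → ∀ j : ℕ,
      (Summable fun i =>
        |a (j + i) * f (x (j + i + 1)) + q (j + i) * opow (x (j + i)) α|) ∧
      ∑' i : ℕ, |a (j + i) * f (x (j + i + 1)) + q (j + i) * opow (x (j + i)) α| ≤ cstar)
    (Lγ Ld Lα : ℝ)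
    -- `L_γ` is a Lipschitz constant of `t ↦ t^{1/γ}` on `[-cstar, cstar]`
    (hLγ : ∀ t s : ℝ, |t| ≤ cstar → |s| ≤ cstar →
      |opow t γ⁻¹ - opow s γ⁻¹| ≤ Lγ * |t - s|)
    -- `L_d` is a Lipschitz constant of `f` on `[-d, d]`
    (hLd : ∀ u v : ℝ, |u| ≤ d → |v| ≤ d → |f u - f v| ≤ Ld * |u - v|)
    -- `L_α` is a Lipschitz constant of `u ↦ u^α` on `[-d, d]`
    (hLα : ∀ u v : ℝ, |u| ≤ d → |v| ≤ d → |opow u α - opow v α| ≤ Lα * |u - v|) :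
    ∀ x y : ℕ → ℝ, (∀ i, n₀ ≤ i → |x i| ≤ d) → (∀ i, n₀ ≤ i → |y i| ≤ d) →
      -- the series defining `Tx` and `Ty` converge
      (∀ n, n₃ ≤ n → Summable fun j =>
        opow ((1 / r (n + j)) * ∑' i : ℕ,
          (a (n + j + i) * f (x (n + j + i + 1)) +
            q (n + j + i) * opow (x (n + j + i)) α)) γ⁻¹) →
      (∀ n, n₃ ≤ n → Summable fun j =>
        opow ((1 / r (n + j)) * ∑' i : ℕ,
          (a (n + j + i) * f (y (n + j + i + 1)) +
            q (n + j + i) * opow (y (n + j + i)) α)) γ⁻¹) →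
      -- the series appearing on the right-hand side converge absolutely
      (∀ j : ℕ, Summable fun i => |a (j + i)| * |x (j + i + 1) - y (j + i + 1)|) →
      (∀ j : ℕ, Summable fun i => |q (j + i)| * |x (j + i) - y (j + i)|) →
      (∀ n, n₃ ≤ n → Summable fun j => |1 / r (n + j)| ^ (γ : ℝ)⁻¹ *
        ∑' i : ℕ, |a (n + j + i)| * |x (n + j + i + 1) - y (n + j + i + 1)|) →
      (∀ n, n₃ ≤ n → Summable fun j => |1 / r (n + j)| ^ (γ : ℝ)⁻¹ *
        ∑' i : ℕ, |q (n + j + i)| * |x (n + j + i) - y (n + j + i)|) →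
      ∀ n, n₃ ≤ n →
        |Tmap k n₃ r a p q f α γ x n - Tmap k n₃ r a p q f α γ y n| ≤
          |p n| * |x (n - k) - y (n - k)|
          + Lγ * Ld * ∑' j : ℕ, |1 / r (n + j)| ^ (γ : ℝ)⁻¹ *
              ∑' i : ℕ, |a (n + j + i)| * |x (n + j + i + 1) - y (n + j + i + 1)|
          + Lγ * Lα * ∑' j : ℕ, |1 / r (n + j)| ^ (γ : ℝ)⁻¹ *
              ∑' i : ℕ, |q (n + j + i)| * |x (n + j + i) - y (n + j + i)| := by

  intro x y hx hy hsx hsy hA hQ hSA hSQ n hn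
  have hγR : (0 : ℝ) < (γ : ℝ) := by exact_mod_cast hγ0
  have hcast : ((γ⁻¹ : ℚ) : ℝ) = (γ : ℝ)⁻¹ := by push_cast; ring
  have hρ : ((γ⁻¹ : ℚ) : ℝ) ≠ 0 := by rw [hcast]; exact inv_ne_zero hγR.ne'
  have hn₀n : ∀ m : ℕ, n ≤ m → n₀ ≤ m := by
    intro m hm; omega
  -- nonnegativity of the Lipschitz constants
  have hLγ0 : 0 ≤ Lγ := by
    have h := hLγ cstar 0 (by rw [abs_of_pos hcstar0]) (by simpa using hcstar0.le)
    have h2 : (0:ℝ) ≤ Lγ * cstar := le_trans (abs_nonneg _)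
      (by simpa [abs_of_pos hcstar0] using h)
    exact nonneg_of_mul_nonneg_right (by linarith : (0:ℝ) ≤ cstar * Lγ) hcstar0
  have hLd0 : 0 ≤ Ld := by
    have h := hLd d 0 (by rw [abs_of_pos hd]) (by simpa using hd.le)
    have h2 : (0:ℝ) ≤ Ld * d := le_trans (abs_nonneg _) (by simpa [abs_of_pos hd] using h)
    exact nonneg_of_mul_nonneg_right (by linarith : (0:ℝ) ≤ d * Ld) hd
  simp only [Tmap, if_pos hn]
  set Sx : ℕ → ℝ := fun j => ∑' i : ℕ, (a (n + j + i) * f (x (n + j + i + 1)) +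
      q (n + j + i) * opow (x (n + j + i)) α) with hSxdef
  set Sy : ℕ → ℝ := fun j => ∑' i : ℕ, (a (n + j + i) * f (y (n + j + i + 1)) +
      q (n + j + i) * opow (y (n + j + i)) α) with hSydef
  set ux : ℕ → ℝ := fun j => opow ((1 / r (n + j)) * Sx j) γ⁻¹ with huxdef
  set uy : ℕ → ℝ := fun j => opow ((1 / r (n + j)) * Sy j) γ⁻¹ with huydef
  set Fa : ℕ → ℝ := fun j => |1 / r (n + j)| ^ (γ : ℝ)⁻¹ *
      ∑' i : ℕ, |a (n + j + i)| * |x (n + j + i + 1) - y (n + j + i + 1)| with hFadef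
  set Fq : ℕ → ℝ := fun j => |1 / r (n + j)| ^ (γ : ℝ)⁻¹ *
      ∑' i : ℕ, |q (n + j + i)| * |x (n + j + i) - y (n + j + i)| with hFqdef
  have hsux : Summable ux := hsx n hn
  have hsuy : Summable uy := hsy n hn
  have hFa : Summable Fa := hSA n hn
  have hFq : Summable Fq := hSQ n hn
  -- summability and bounds of the inner series
  have hsumx : ∀ j : ℕ, Summable (fun i => a (n + j + i) * f (x (n + j + i + 1)) +
      q (n + j + i) * opow (x (n + j + i)) α) := fun j => (hcstar x hx (n + j)).1.of_abs
  have hsumy : ∀ j : ℕ, Summable (fun i => a (n + j + i) * f (y (n + j + i + 1)) +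
      q (n + j + i) * opow (y (n + j + i)) α) := fun j => (hcstar y hy (n + j)).1.of_abs
  have hSxb : ∀ j, |Sx j| ≤ cstar := by
    intro j
    refine le_trans ?_ (hcstar x hx (n + j)).2
    simpa [Real.norm_eq_abs] using
      norm_tsum_le_tsum_norm (f := fun i => a (n + j + i) * f (x (n + j + i + 1)) +
        q (n + j + i) * opow (x (n + j + i)) α)
        (by simpa [Real.norm_eq_abs] using (hcstar x hx (n + j)).1)
  have hSyb : ∀ j, |Sy j| ≤ cstar := by
    intro j
    refine le_trans ?_ (hcstar y hy (n + j)).2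
    simpa [Real.norm_eq_abs] using
      norm_tsum_le_tsum_norm (f := fun i => a (n + j + i) * f (y (n + j + i + 1)) +
        q (n + j + i) * opow (y (n + j + i)) α)
        (by simpa [Real.norm_eq_abs] using (hcstar y hy (n + j)).1)
  -- the term-wise estimate for the difference of inner sums
  have hdiff : ∀ j : ℕ, |Sx j - Sy j| ≤
      Ld * (∑' i : ℕ, |a (n + j + i)| * |x (n + j + i + 1) - y (n + j + i + 1)|) +
      Lα * (∑' i : ℕ, |q (n + j + i)| * |x (n + j + i) - y (n + j + i)|) := by
    intro j
    set tx : ℕ → ℝ := fun i => a (n + j + i) * f (x (n + j + i + 1)) +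
        q (n + j + i) * opow (x (n + j + i)) α
    set ty : ℕ → ℝ := fun i => a (n + j + i) * f (y (n + j + i + 1)) +
        q (n + j + i) * opow (y (n + j + i)) α
    set g : ℕ → ℝ := fun i => Ld * (|a (n + j + i)| * |x (n + j + i + 1) - y (n + j + i + 1)|)
        + Lα * (|q (n + j + i)| * |x (n + j + i) - y (n + j + i)|) with hgdef
    have hg : Summable g := ((hA (n + j)).mul_left Ld).add ((hQ (n + j)).mul_left Lα)
    have hle : ∀ i, |tx i - ty i| ≤ g i := by
      intro i
      have h1 : |f (x (n + j + i + 1)) - f (y (n + j + i + 1))| ≤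
          Ld * |x (n + j + i + 1) - y (n + j + i + 1)| :=
        hLd _ _ (hx _ (by omega)) (hy _ (by omega))
      have h2 : |opow (x (n + j + i)) α - opow (y (n + j + i)) α| ≤
          Lα * |x (n + j + i) - y (n + j + i)| :=
        hLα _ _ (hx _ (by omega)) (hy _ (by omega))
      have heq : tx i - ty i =
          a (n + j + i) * (f (x (n + j + i + 1)) - f (y (n + j + i + 1))) +
          q (n + j + i) * (opow (x (n + j + i)) α - opow (y (n + j + i)) α) := by
        simp only [tx, ty]; ring
      calc |tx i - ty i| ≤ |a (n + j + i) * (f (x (n + j + i + 1)) - f (y (n + j + i + 1)))|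
            + |q (n + j + i) * (opow (x (n + j + i)) α - opow (y (n + j + i)) α)| := by
            rw [heq]; exact abs_add_le _ _
        _ ≤ |a (n + j + i)| * (Ld * |x (n + j + i + 1) - y (n + j + i + 1)|)
            + |q (n + j + i)| * (Lα * |x (n + j + i) - y (n + j + i)|) := by
            rw [abs_mul, abs_mul]
            exact add_le_add (mul_le_mul_of_nonneg_left h1 (abs_nonneg _))
              (mul_le_mul_of_nonneg_left h2 (abs_nonneg _))
        _ = g i := by simp only [hgdef]; ring
    have habs : Summable (fun i => |tx i - ty i|) :=
      Summable.of_nonneg_of_le (fun i => abs_nonneg _) hle hg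
    have hsub : Sx j - Sy j = ∑' i, (tx i - ty i) := (Summable.tsum_sub (hsumx j) (hsumy j)).symm
    calc |Sx j - Sy j| = |∑' i, (tx i - ty i)| := by rw [hsub]
      _ ≤ ∑' i, |tx i - ty i| := by
          simpa [Real.norm_eq_abs] using
            norm_tsum_le_tsum_norm (f := fun i => tx i - ty i)
              (by simpa [Real.norm_eq_abs] using habs)
      _ ≤ ∑' i, g i := Summable.tsum_le_tsum hle habs hg
      _ = Ld * (∑' i : ℕ, |a (n + j + i)| * |x (n + j + i + 1) - y (n + j + i + 1)|)
          + Lα * (∑' i : ℕ, |q (n + j + i)| * |x (n + j + i) - y (n + j + i)|) := by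
          rw [Summable.tsum_add ((hA (n + j)).mul_left Ld) ((hQ (n + j)).mul_left Lα),
            tsum_mul_left, tsum_mul_left]
  -- the pointwise estimate for `|ux j - uy j|`
  have hpt : ∀ j : ℕ, |ux j - uy j| ≤ Lγ * Ld * Fa j + Lγ * Lα * Fq j := by
    intro j
    have hC : (0 : ℝ) ≤ |1 / r (n + j)| ^ (γ : ℝ)⁻¹ := Real.rpow_nonneg (abs_nonneg _) _
    have hmul : |ux j - uy j| = |1 / r (n + j)| ^ (γ : ℝ)⁻¹ *
        |opow (Sx j) γ⁻¹ - opow (Sy j) γ⁻¹| := by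
      simp only [huxdef, huydef]
      rw [opow_mul_sub_abs γ⁻¹ hρ, hcast]
    have h2 : |opow (Sx j) γ⁻¹ - opow (Sy j) γ⁻¹| ≤ Lγ * |Sx j - Sy j| :=
      hLγ _ _ (hSxb j) (hSyb j)
    calc |ux j - uy j| ≤ |1 / r (n + j)| ^ (γ : ℝ)⁻¹ * (Lγ * |Sx j - Sy j|) := by
          rw [hmul]; exact mul_le_mul_of_nonneg_left h2 hC
      _ ≤ |1 / r (n + j)| ^ (γ : ℝ)⁻¹ * (Lγ *
          (Ld * (∑' i : ℕ, |a (n + j + i)| * |x (n + j + i + 1) - y (n + j + i + 1)|) +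
           Lα * (∑' i : ℕ, |q (n + j + i)| * |x (n + j + i) - y (n + j + i)|))) :=
          mul_le_mul_of_nonneg_left (mul_le_mul_of_nonneg_left (hdiff j) hLγ0) hC
      _ = Lγ * Ld * Fa j + Lγ * Lα * Fq j := by simp only [hFadef, hFqdef]; ring
  have hbound : Summable (fun j => Lγ * Ld * Fa j + Lγ * Lα * Fq j) :=
    (hFa.mul_left (Lγ * Ld)).add (hFq.mul_left (Lγ * Lα))
  have habsu : Summable (fun j => |ux j - uy j|) :=
    Summable.of_nonneg_of_le (fun j => abs_nonneg _) hpt hbound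
  have hUdiff : ∑' j, (ux j - uy j) = (∑' j, ux j) - ∑' j, uy j := Summable.tsum_sub hsux hsuy
  have hmain : |(∑' j, ux j) - ∑' j, uy j| ≤
      Lγ * Ld * ∑' j, Fa j + Lγ * Lα * ∑' j, Fq j := by
    calc |(∑' j, ux j) - ∑' j, uy j| = |∑' j, (ux j - uy j)| := by rw [hUdiff]
      _ ≤ ∑' j, |ux j - uy j| := by
          simpa [Real.norm_eq_abs] using
            norm_tsum_le_tsum_norm (f := fun j => ux j - uy j)
              (by simpa [Real.norm_eq_abs] using habsu)
      _ ≤ ∑' j, (Lγ * Ld * Fa j + Lγ * Lα * Fq j) := Summable.tsum_le_tsum hpt habsu hbound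
      _ = Lγ * Ld * ∑' j, Fa j + Lγ * Lα * ∑' j, Fq j := by
          rw [Summable.tsum_add (hFa.mul_left (Lγ * Ld)) (hFq.mul_left (Lγ * Lα)),
            tsum_mul_left, tsum_mul_left]
  have hsplit : (-(p n * x (n - k)) - ∑' j, ux j) - (-(p n * y (n - k)) - ∑' j, uy j)
      = -((p n * (x (n - k) - y (n - k))) + ((∑' j, ux j) - ∑' j, uy j)) := by ring
  calc |(-(p n * x (n - k)) - ∑' j, ux j) - (-(p n * y (n - k)) - ∑' j, uy j)|
      = |(p n * (x (n - k) - y (n - k))) + ((∑' j, ux j) - ∑' j, uy j)| := by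
        rw [hsplit, abs_neg]
    _ ≤ |p n * (x (n - k) - y (n - k))| + |(∑' j, ux j) - ∑' j, uy j| := abs_add_le _ _
    _ ≤ |p n| * |x (n - k) - y (n - k)| +
        (Lγ * Ld * ∑' j, Fa j + Lγ * Lα * ∑' j, Fq j) := by
        rw [abs_mul]; exact add_le_add (le_refl _) hmain
    _ = |p n| * |x (n - k) - y (n - k)| + Lγ * Ld * ∑' j, Fa j
        + Lγ * Lα * ∑' j, Fq j := by ring
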